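/- The unit square minimizes J(Ω) = λ₁(Ω)/h₁(Ω)² among all rectangles: for all a, b > 0, π²(1/a²+1/b²) · (a + b - √((a-b)² + πab))²/(4-π)² ≥ 2π²(2-√π)²/(4-π)², with equality iff a = b. -/
import Mathlib
set_option maxHeartbeats 1000000


open Real

private lemma J_eq_case (a : ℝ) (ha : 0 < a) :
    π ^ 2 * (1 / a ^ 2 + 1 / a ^ 2) *
        (a + a - Real.sqrt ((a - a) ^ 2 + π * a * a)) ^ 2 / (4 - π) ^ 2 =
      2 * π ^ 2 * (2 - Real.sqrt π) ^ 2 / (4 - π) ^ 2 := by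
  have hπ4 : π < 4 := by linarith [Real.pi_lt_d2]
  have hst : Real.sqrt ((a - a) ^ 2 + π * a * a) = Real.sqrt π * a := by
    rw [show (a - a) ^ 2 + π * a * a = (Real.sqrt π * a) ^ 2 by
      linear_combination (-a ^ 2) * Real.sq_sqrt Real.pi_pos.le]
    exact Real.sqrt_sq (by positivity)
  rw [hst]
  have ha' : a ≠ 0 := ne_of_gt ha
  have h4 : (4 : ℝ) - π ≠ 0 := by linarith
  field_simp
  ring

private lemma J_strict_case (a b : ℝ) (ha : 0 < a) (hb : 0 < b) (hne : a ≠ b) :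
    2 * π ^ 2 * (2 - Real.sqrt π) ^ 2 / (4 - π) ^ 2 <
      π ^ 2 * (1 / a ^ 2 + 1 / b ^ 2) *
        (a + b - Real.sqrt ((a - b) ^ 2 + π * a * b)) ^ 2 / (4 - π) ^ 2 := by
  have hπgt : (3.141592 : ℝ) < π := Real.pi_gt_d6
  have hπlt : π < 3.15 := Real.pi_lt_d2
  have hπpos : (0 : ℝ) < π := Real.pi_pos
  set q := Real.sqrt π with hqdef
  have hq2 : q ^ 2 = π := Real.sq_sqrt hπpos.le
  have hq0 : 0 < q := Real.sqrt_pos.2 hπpos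
  have hqlt : q < 1.78 := by nlinarith
  have hqgt : (1.77 : ℝ) < q := by nlinarith
  set t := Real.sqrt ((a - b) ^ 2 + π * a * b) with htdef
  have htarg : (0 : ℝ) ≤ (a - b) ^ 2 + π * a * b := by positivity
  have ht2 : t ^ 2 = (a - b) ^ 2 + π * a * b := Real.sq_sqrt htarg
  have ht0 : (0 : ℝ) ≤ t := Real.sqrt_nonneg _
  have habpos : (0 : ℝ) < a * b := mul_pos ha hb
  have hsub : (a - b) ≠ 0 := sub_ne_zero.2 hne
  have hsubpos : (0 : ℝ) < (a - b) ^ 2 :=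
    lt_of_le_of_ne (sq_nonneg _) (Ne.symm (pow_ne_zero 2 hsub))
  -- q power bounds
  have hq2' : (1.77 : ℝ) ^ 2 < q ^ 2 := by nlinarith
  have hq3' : (1.77 : ℝ) ^ 3 < q ^ 3 := by nlinarith
  have hq4' : (1.77 : ℝ) ^ 4 < q ^ 4 := by nlinarith
  have hq2u : q ^ 2 < 3.15 := by rw [hq2]; exact hπlt
  -- coefficient bounds
  have hA : (88 : ℝ) < q ^ 4 + 8 * q ^ 3 + 16 * q ^ 2 - 16 := by nlinarith
  have hB : 2 * (q ^ 2 - 4) ^ 2 < 2 := by nlinarith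
  -- H > 0
  have hH : 0 < (q ^ 4 + 8 * q ^ 3 + 16 * q ^ 2 - 16) * (a ^ 2 + b ^ 2)
      - 2 * (q ^ 2 - 4) ^ 2 * (a * b) := by
    nlinarith [mul_nonneg (by linarith : (0:ℝ) ≤ q ^ 4 + 8 * q ^ 3 + 16 * q ^ 2 - 16 - 88)
        (sq_nonneg (a - b)), sq_nonneg (a - b), habpos]
  -- LHS of the squared inequality is positive
  have hL1 : 0 < q * ((4 + q) * (a ^ 2 + b ^ 2) - 2 * q * (a * b)) := by
    nlinarith [sq_nonneg (a - b), habpos, hq0]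
  -- squared inequality (strict)
  have hGid : (q * ((4 + q) * (a ^ 2 + b ^ 2) - 2 * q * (a * b))) ^ 2
      - (4 * (a + b) * t) ^ 2
      = (a - b) ^ 2 * ((q ^ 4 + 8 * q ^ 3 + 16 * q ^ 2 - 16) * (a ^ 2 + b ^ 2)
        - 2 * (q ^ 2 - 4) ^ 2 * (a * b)) := by
    linear_combination (-16 * (a + b) ^ 2) * ht2 + (16 * (a + b) ^ 2 * a * b) * hq2
  have hGpos : (4 * (a + b) * t) ^ 2
      < (q * ((4 + q) * (a ^ 2 + b ^ 2) - 2 * q * (a * b))) ^ 2 := by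
    linarith [hGid, mul_pos hsubpos hH]
  have hRnn : (0 : ℝ) ≤ 4 * (a + b) * t :=
    mul_nonneg (by linarith : (0:ℝ) ≤ 4 * (a + b)) ht0
  have h1 : 4 * (a + b) * t < q * ((4 + q) * (a ^ 2 + b ^ 2) - 2 * q * (a * b)) := by
    nlinarith [hGpos, hL1, hRnn]
  -- key strict inequality
  have hkey : 2 * (a + b + t) ^ 2 < (a ^ 2 + b ^ 2) * (2 + q) ^ 2 := by
    have hid : (a ^ 2 + b ^ 2) * (2 + q) ^ 2 - 2 * (a + b + t) ^ 2
        = q * ((4 + q) * (a ^ 2 + b ^ 2) - 2 * q * (a * b)) - 4 * (a + b) * t := by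
      linear_combination (-2) * ht2 + (2 * a * b) * hq2
    linarith
  -- product relation
  have hY : (a + b - t) * (a + b + t) = (4 - π) * a * b := by
    linear_combination (-1) * ht2
  have hW : (0 : ℝ) < a + b + t := by linarith
  have h2q : (0 : ℝ) < 2 - q := by linarith
  have h4π : (0 : ℝ) < 4 - π := by linarith
  -- multiply key by (2-q)^2 * a^2 b^2 and use hY
  have hc : (0 : ℝ) < (2 - q) ^ 2 * (a ^ 2 * b ^ 2) := by positivity
  have h4 : (2 * (2 - q) ^ 2 * (a ^ 2 * b ^ 2)) * (a + b + t) ^ 2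
      < ((a ^ 2 + b ^ 2) * (a + b - t) ^ 2) * (a + b + t) ^ 2 := by
    have e : ((a ^ 2 + b ^ 2) * (a + b - t) ^ 2) * (a + b + t) ^ 2
        = ((a ^ 2 + b ^ 2) * (2 + q) ^ 2) * ((2 - q) ^ 2 * (a ^ 2 * b ^ 2)) := by
      have e1 : ((a + b - t) * (a + b + t)) ^ 2 = ((4 - π) * a * b) ^ 2 := by rw [hY]
      linear_combination (a ^ 2 + b ^ 2) * e1
        + ((a ^ 2 + b ^ 2) * (a ^ 2 * b ^ 2) * (8 - π - q ^ 2)) * hq2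
    rw [e]
    nlinarith [mul_lt_mul_of_pos_right hkey hc]
  have hM : 2 * (2 - q) ^ 2 * (a ^ 2 * b ^ 2)
      < (a ^ 2 + b ^ 2) * (a + b - t) ^ 2 :=
    lt_of_mul_lt_mul_right h4 (sq_nonneg _)
  -- convert to the divided form
  have ha' : a ≠ 0 := ne_of_gt ha
  have hb' : b ≠ 0 := ne_of_gt hb
  have h4' : (4 : ℝ) - π ≠ 0 := ne_of_gt h4π
  rw [div_lt_div_iff₀ (by positivity) (by positivity)]
  have h1a : 1 / a ^ 2 + 1 / b ^ 2 = (a ^ 2 + b ^ 2) / (a ^ 2 * b ^ 2) := by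
    field_simp; ring
  rw [h1a]
  have hD : (0:ℝ) < a ^ 2 * b ^ 2 := by positivity
  rw [show π ^ 2 * ((a ^ 2 + b ^ 2) / (a ^ 2 * b ^ 2)) * (a + b - t) ^ 2 * (4 - π) ^ 2
      = (π ^ 2 * (a ^ 2 + b ^ 2) * (a + b - t) ^ 2 * (4 - π) ^ 2) / (a ^ 2 * b ^ 2) from by
        ring, lt_div_iff₀ hD]
  nlinarith [mul_lt_mul_of_pos_left hM (mul_pos (pow_pos hπpos 2) (pow_pos h4π 2))]

/-- The unit square minimizes J among rectangles: for all a, b > 0,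
π²(1/a²+1/b²)(a+b-√((a-b)²+πab))²/(4-π)² ≥ 2π²(2-√π)²/(4-π)², with equality iff a = b. -/
theorem square_minimizes_J_rectangles (a b : ℝ) (ha : 0 < a) (hb : 0 < b) :
    π ^ 2 * (1 / a ^ 2 + 1 / b ^ 2) *
        (a + b - Real.sqrt ((a - b) ^ 2 + π * a * b)) ^ 2 / (4 - π) ^ 2 ≥
      2 * π ^ 2 * (2 - Real.sqrt π) ^ 2 / (4 - π) ^ 2 ∧
    (π ^ 2 * (1 / a ^ 2 + 1 / b ^ 2) *
        (a + b - Real.sqrt ((a - b) ^ 2 + π * a * b)) ^ 2 / (4 - π) ^ 2 =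
      2 * π ^ 2 * (2 - Real.sqrt π) ^ 2 / (4 - π) ^ 2 ↔ a = b) := by
  rcases eq_or_ne a b with hab | hab
  · subst hab
    exact ⟨ge_of_eq (J_eq_case a ha), iff_of_true (J_eq_case a ha) rfl⟩
  · have hlt := J_strict_case a b ha hb hab
    refine ⟨le_of_lt hlt, ?_⟩
    constructor
    · intro heq; exact absurd heq.symm (ne_of_lt hlt)
    · intro h; exact absurd h hab
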